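/- Let (u_t)_{0≤t≤T₀} and (u'_t)_{0≤t≤T₀} be two solutions of the nonlinear renewal equation with the same nonnegative initial condition g ∈ L¹([0,∞)), and suppose ‖u_s‖₁ ≤ R and ‖u'_s‖₁ ≤ R for all s ≤ T₀, and that |C(t,μ) − C(t,ν)| ≤ L·d_Pr(μ,ν) for all t ≤ T₀. Then for every t ∈ [0,T₀], ‖u_t − u'_t‖₁ ≤ ‖τ‖_∞·(L·R + 1)·∫₀^t ‖u_s − u'_s‖₁ ds; consequently, by Grönwall's inequality, u_t = u'_t in L¹([0,∞)) for every t ∈ [0,T₀]. -/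

import Mathlib

open MeasureTheory Set Filter

/-- The finite measure on `[0,∞)` with Lebesgue density `f`. -/
noncomputable def densMeasure (f : ℝ → ℝ) : Measure ℝ :=
  (volume.restrict (Ici 0)).withDensity fun a => ENNReal.ofReal (f a)

/-- The `L¹([0,∞))`-norm of a function. -/
noncomputable def L1norm (f : ℝ → ℝ) : ℝ := ∫ a in Ici (0 : ℝ), |f a|

/-- `C` is Lipschitz in its measure argument, with constant `L`, uniformly over times in
`[0, T]`, with respect to the Lévy–Prokhorov distance on the finite nonnegative Borel
measures supported on `[0, ∞)`. -/
def ProkhorovLipschitz (C : ℝ → Measure ℝ → ℝ) (L T : ℝ) : Prop :=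
  ∀ t ∈ Icc (0 : ℝ) T, ∀ μ ν : Measure ℝ, IsFiniteMeasure μ → IsFiniteMeasure ν →
    μ (Iio 0) = 0 → ν (Iio 0) = 0 →
    |C t μ - C t ν| ≤ L * levyProkhorovDist μ ν

/-- `C` is (jointly) continuous on `[0,∞) × M([0,∞))`, where the space of finite
nonnegative measures on `[0,∞)` carries the weak topology, metrized by the
Lévy–Prokhorov distance. -/
def ProkhorovContinuous (C : ℝ → Measure ℝ → ℝ) : Prop :=
  ∀ t ∈ Ici (0 : ℝ), ∀ μ : Measure ℝ, IsFiniteMeasure μ → μ (Iio 0) = 0 →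
    ∀ ε > (0 : ℝ), ∃ δ > (0 : ℝ), ∀ s ∈ Ici (0 : ℝ), ∀ ν : Measure ℝ,
      IsFiniteMeasure ν → ν (Iio 0) = 0 →
      |s - t| < δ → levyProkhorovDist μ ν < δ → |C s ν - C t μ| < ε

/-- `u = (u_t)_{t ∈ I}` is a solution of the nonlinear renewal equation with initial
condition `g`, for times in the set `I`: each `u_t` is nonnegative and in `L¹([0,∞))`,
`u_t(a) = C(t-a, u_{t-a}) ∫₀^∞ u_{t-a}(s) τ(s) ds` for a.e. `a ∈ [0,t)`, and
`u_t(a) = g(a-t)` for a.e. `a ≥ t`. -/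
def IsRenewalSolutionOn (τ : ℝ → ℝ) (C : ℝ → Measure ℝ → ℝ) (g : ℝ → ℝ)
    (u : ℝ → ℝ → ℝ) (I : Set ℝ) : Prop :=
  ∀ t ∈ I,
    Integrable (u t) (volume.restrict (Ici 0)) ∧
    (∀ᵐ a ∂(volume.restrict (Ici (0 : ℝ))), 0 ≤ u t a) ∧
    (∀ᵐ a ∂(volume.restrict (Ico (0 : ℝ) t)),
      u t a = C (t - a) (densMeasure (u (t - a))) * ∫ z in Ici (0 : ℝ), u (t - a) z * τ z) ∧
    (∀ᵐ a ∂(volume.restrict (Ici t)), u t a = g (a - t))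

lemma densMeasure_apply (f : ℝ → ℝ) {s : Set ℝ} (hs : MeasurableSet s) :
    densMeasure f s = ∫⁻ a in s, ENNReal.ofReal (f a) ∂(volume.restrict (Ici 0)) :=
  withDensity_apply _ hs

lemma densMeasure_Iio (f : ℝ → ℝ) : densMeasure f (Iio 0) = 0 := by
  rw [densMeasure_apply f measurableSet_Iio, Measure.restrict_restrict measurableSet_Iio]
  have h : Iio (0 : ℝ) ∩ Ici 0 = ∅ := by
    ext x; simp only [mem_inter_iff, mem_Iio, mem_Ici, mem_empty_iff_false, iff_false, not_and,
      not_le]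
    intro h; exact h
  rw [h]
  simp

lemma densMeasure_finite {f : ℝ → ℝ} (hf : Integrable f (volume.restrict (Ici 0))) :
    IsFiniteMeasure (densMeasure f) := by
  constructor
  rw [densMeasure_apply f MeasurableSet.univ, Measure.restrict_univ]
  have h1 : ∫⁻ a, ENNReal.ofReal (f a) ∂(volume.restrict (Ici 0)) ≤
      ∫⁻ a, (‖f a‖₊ : ENNReal) ∂(volume.restrict (Ici 0)) := by
    refine lintegral_mono fun a => ?_
    rw [← enorm_eq_nnnorm, Real.enorm_eq_ofReal_abs]
    exact ENNReal.ofReal_le_ofReal (le_abs_self _)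
  exact lt_of_le_of_lt h1 hf.2

lemma levyProkhorovDist_densMeasure_le (f h : ℝ → ℝ)
    (hf : Integrable f (volume.restrict (Ici 0)))
    (hh : Integrable h (volume.restrict (Ici 0))) :
    levyProkhorovDist (densMeasure f) (densMeasure h) ≤ ∫ a in Ici (0 : ℝ), |f a - h a| := by
  set D := ∫ a in Ici (0 : ℝ), |f a - h a| with hDdef
  have hD0 : 0 ≤ D := integral_nonneg fun a => abs_nonneg _
  have hlint : ∫⁻ a, ENNReal.ofReal |f a - h a| ∂(volume.restrict (Ici 0)) = ENNReal.ofReal D :=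
    (ofReal_integral_eq_lintegral_ofReal (hf.sub hh).abs
      (Eventually.of_forall fun a => abs_nonneg _)).symm
  have claim : ∀ p q : ℝ → ℝ, AEMeasurable q (volume.restrict (Ici (0 : ℝ))) →
      (∫⁻ a, ENNReal.ofReal |p a - q a| ∂(volume.restrict (Ici 0)) = ENNReal.ofReal D) →
      ∀ B : Set ℝ, MeasurableSet B → densMeasure p B ≤ densMeasure q B + ENNReal.ofReal D := by
    intro p q hq hpq B hB
    rw [densMeasure_apply p hB, densMeasure_apply q hB]
    have mono : ∀ a, ENNReal.ofReal (p a) ≤ ENNReal.ofReal (q a) + ENNReal.ofReal |p a - q a| := by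
      intro a
      calc ENNReal.ofReal (p a) ≤ ENNReal.ofReal (q a + |p a - q a|) :=
            ENNReal.ofReal_le_ofReal (by rcases abs_cases (p a - q a) with h | h <;> linarith)
        _ ≤ _ := ENNReal.ofReal_add_le
    calc ∫⁻ a in B, ENNReal.ofReal (p a) ∂(volume.restrict (Ici 0))
        ≤ ∫⁻ a in B, (ENNReal.ofReal (q a) + ENNReal.ofReal |p a - q a|)
            ∂(volume.restrict (Ici 0)) := lintegral_mono fun a => mono a
      _ = (∫⁻ a in B, ENNReal.ofReal (q a) ∂(volume.restrict (Ici 0))) +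
            ∫⁻ a in B, ENNReal.ofReal |p a - q a| ∂(volume.restrict (Ici 0)) :=
          lintegral_add_left' ((ENNReal.measurable_ofReal.comp_aemeasurable (hq.restrict))) _
      _ ≤ (∫⁻ a in B, ENNReal.ofReal (q a) ∂(volume.restrict (Ici 0))) + ENNReal.ofReal D := by
          refine add_le_add le_rfl ?_
          rw [← hpq]
          exact setLIntegral_le_lintegral _ _
  have hfm : AEMeasurable f (volume.restrict (Ici (0 : ℝ))) := hf.aemeasurable
  have hhm : AEMeasurable h (volume.restrict (Ici (0 : ℝ))) := hh.aemeasurable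
  have hlint' : ∫⁻ a, ENNReal.ofReal |h a - f a| ∂(volume.restrict (Ici 0)) =
      ENNReal.ofReal D := by
    simp_rw [abs_sub_comm]
    exact hlint
  have c1 := claim f h hhm hlint
  have c2 := claim h f hfm hlint'
  have hedist : levyProkhorovEDist (densMeasure f) (densMeasure h) ≤ ENNReal.ofReal D := by
    apply levyProkhorovEDist_le_of_forall
    intro ε B hε hεtop hB
    have hε0 : 0 < ε.toReal :=
      ENNReal.toReal_pos (fun h0 => by simp [h0] at hε) hεtop.ne
    constructor
    · calc densMeasure f B ≤ densMeasure h B + ENNReal.ofReal D := c1 B hB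
        _ ≤ densMeasure h (Metric.thickening ε.toReal B) + ε :=
            add_le_add (measure_mono (Metric.self_subset_thickening hε0 B)) hε.le
    · calc densMeasure h B ≤ densMeasure f B + ENNReal.ofReal D := c2 B hB
        _ ≤ densMeasure f (Metric.thickening ε.toReal B) + ε :=
            add_le_add (measure_mono (Metric.self_subset_thickening hε0 B)) hε.le
  exact ENNReal.toReal_le_of_le_ofReal hD0 hedist

/-- Grönwall estimate and uniqueness: if `(u_t)` and `(u'_t)` are two
solutions on `[0,T₀]` of the nonlinear renewal equation with the same nonnegative initial
condition `g`, both of `L¹`-norm at most `R` on `[0,T₀]`, and `C` is `L`-Lipschitz in the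
measure argument (Prokhorov distance) for `t ≤ T₀`, then
`‖u_t − u'_t‖₁ ≤ ‖τ‖_∞·(L·R + 1)·∫₀^t ‖u_s − u'_s‖₁ ds` for all `t ∈ [0,T₀]`, and
consequently `u_t = u'_t` in `L¹([0,∞))` for every `t ∈ [0,T₀]`. -/
theorem renewal_solution_gronwall_uniqueness
    (τ : ℝ → ℝ) (hτmeas : Measurable τ) (hτnonneg : ∀ a, 0 ≤ τ a)
    (B : ℝ) (hτB : ∀ᵐ a ∂(volume.restrict (Ici (0 : ℝ))), τ a ≤ B)
    (C : ℝ → Measure ℝ → ℝ)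
    (hC01 : ∀ t μ, C t μ ∈ Icc (0 : ℝ) 1)
    (hCcont : ProkhorovContinuous C)
    (T₀ L R : ℝ) (hT₀ : 0 < T₀)
    (hCLip : ProkhorovLipschitz C L T₀)
    (g : ℝ → ℝ) (hg : Integrable g (volume.restrict (Ici 0)))
    (hgnonneg : ∀ᵐ a ∂(volume.restrict (Ici (0 : ℝ))), 0 ≤ g a)
    (u u' : ℝ → ℝ → ℝ)
    (hu : IsRenewalSolutionOn τ C g u (Icc 0 T₀))
    (hu' : IsRenewalSolutionOn τ C g u' (Icc 0 T₀))
    (hR : ∀ s ∈ Icc (0 : ℝ) T₀, L1norm (u s) ≤ R)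
    (hR' : ∀ s ∈ Icc (0 : ℝ) T₀, L1norm (u' s) ≤ R) :
    (∀ t ∈ Icc (0 : ℝ) T₀,
        L1norm (fun a => u t a - u' t a) ≤
          B * (L * R + 1) * ∫ s in Icc (0 : ℝ) t, L1norm (fun a => u s a - u' s a)) ∧
      ∀ t ∈ Icc (0 : ℝ) T₀, u t =ᵐ[volume.restrict (Ici (0 : ℝ))] u' t := by
  -- notation
  set D : ℝ → ℝ := fun s => ∫ a in Ici (0 : ℝ), |u s a - u' s a| with hDdef
  have hL1D : ∀ s, L1norm (fun a => u s a - u' s a) = D s := fun s => rfl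
  have hDnn : ∀ s, 0 ≤ D s := fun s => integral_nonneg fun a => abs_nonneg _
  -- B is nonnegative
  have hB0 : 0 ≤ B := by
    have hne : volume.restrict (Ici (0 : ℝ)) ≠ 0 := by
      intro h0
      have : (volume.restrict (Ici (0 : ℝ))) (Ici 0) = volume (Ici (0 : ℝ)) := by
        rw [Measure.restrict_apply_self]
      rw [h0] at this
      simp [Real.volume_Ici] at this
    have : ∀ᵐ a ∂(volume.restrict (Ici (0 : ℝ))), 0 ≤ B := by
      filter_upwards [hτB] with a ha
      exact le_trans (hτnonneg a) ha
    have hne' : (ae (volume.restrict (Ici (0 : ℝ)))).NeBot := ae_neBot.mpr hne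
    exact this.exists.choose_spec
  have hR0 : 0 ≤ R := by
    have h0 : (0 : ℝ) ∈ Icc (0 : ℝ) T₀ := ⟨le_refl _, hT₀.le⟩
    exact le_trans (integral_nonneg fun a => abs_nonneg _) (hR 0 h0)
  obtain ⟨K, hKdef⟩ : ∃ K : ℝ, K = B * (max L 0 * R + 1) := ⟨_, rfl⟩
  have hK0 : 0 ≤ K := by
    rw [hKdef]
    have : 0 ≤ max L 0 := le_max_right _ _
    positivity
  -- integrability of products with τ
  have hmulint : ∀ v : ℝ → ℝ, Integrable v (volume.restrict (Ici 0)) →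
      Integrable (fun z => v z * τ z) (volume.restrict (Ici 0)) := by
    intro v hv
    have hb : ∀ᵐ x ∂(volume.restrict (Ici (0 : ℝ))), ‖τ x‖ ≤ B := by
      filter_upwards [hτB] with x hx
      rw [Real.norm_eq_abs, abs_of_nonneg (hτnonneg x)]
      exact hx
    have := hv.bdd_mul (hτmeas.aestronglyMeasurable) hb
    exact this.congr (Eventually.of_forall fun z => mul_comm _ _)
  -- key pointwise a.e. estimate on [0,t)
  have key : ∀ t ∈ Icc (0 : ℝ) T₀, ∀ᵐ a ∂(volume.restrict (Ico (0 : ℝ) t)),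
      |u t a - u' t a| ≤ K * D (t - a) := by
    intro t ht
    obtain ⟨iut, nnut, equt, egut⟩ := hu t ht
    obtain ⟨iut', nnut', equt', egut'⟩ := hu' t ht
    filter_upwards [equt, equt', ae_restrict_mem measurableSet_Ico] with a h1 h2 ha
    set s := t - a with hsdef
    have hsI : s ∈ Icc (0 : ℝ) T₀ := ⟨by linarith [ha.1, ha.2], by linarith [ha.1, ht.2]⟩
    obtain ⟨ius, nnus, _, _⟩ := hu s hsI
    obtain ⟨ius', nnus', _, _⟩ := hu' s hsI
    set N : ℝ := ∫ z in Ici (0 : ℝ), u s z * τ z with hNdef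
    set N' : ℝ := ∫ z in Ici (0 : ℝ), u' s z * τ z with hN'def
    have hN0 : 0 ≤ N := by
      refine integral_nonneg_of_ae ?_
      filter_upwards [nnus] with z hz
      exact mul_nonneg hz (hτnonneg z)
    have hNBR : N ≤ B * R := by
      have hle : ∀ᵐ z ∂(volume.restrict (Ici (0 : ℝ))), u s z * τ z ≤ B * |u s z| := by
        filter_upwards [nnus, hτB] with z hz hBz
        calc u s z * τ z ≤ u s z * B := mul_le_mul_of_nonneg_left hBz hz
          _ = B * |u s z| := by rw [abs_of_nonneg hz]; ring
      have h1' : N ≤ ∫ z in Ici (0 : ℝ), B * |u s z| :=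
        integral_mono_ae (hmulint (u s) ius) (ius.abs.const_mul B) hle
      calc N ≤ ∫ z in Ici (0 : ℝ), B * |u s z| := h1'
        _ = B * L1norm (u s) := by rw [integral_const_mul]; rfl
        _ ≤ B * R := mul_le_mul_of_nonneg_left (hR s hsI) hB0
    have hNN' : |N - N'| ≤ B * D s := by
      have hsub : N - N' = ∫ z in Ici (0 : ℝ), (u s z - u' s z) * τ z := by
        rw [hNdef, hN'def, ← integral_sub (hmulint (u s) ius) (hmulint (u' s) ius')]
        congr 1
        funext z
        ring
      have hintsub : Integrable (fun z => (u s z - u' s z) * τ z)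
          (volume.restrict (Ici 0)) := hmulint _ (ius.sub ius')
      rw [hsub]
      have hintabs : Integrable (fun z => |u s z - u' s z| * |τ z|)
          (volume.restrict (Ici 0)) :=
        hintsub.abs.congr (Eventually.of_forall fun z => abs_mul _ _)
      calc |∫ z in Ici (0 : ℝ), (u s z - u' s z) * τ z|
          ≤ ∫ z in Ici (0 : ℝ), |u s z - u' s z| * |τ z| := by
            simpa [Real.norm_eq_abs, abs_mul] using norm_integral_le_integral_norm
              (μ := volume.restrict (Ici (0 : ℝ))) (fun z => (u s z - u' s z) * τ z)
        _ ≤ ∫ z in Ici (0 : ℝ), B * |u s z - u' s z| := by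
            refine integral_mono_ae hintabs ((ius.sub ius').abs.const_mul B) ?_
            filter_upwards [hτB] with z hBz
            rw [abs_of_nonneg (hτnonneg z)]
            exact le_trans (mul_le_mul_of_nonneg_left hBz (abs_nonneg _))
              (le_of_eq (mul_comm _ _))
        _ = B * D s := by rw [integral_const_mul]
    have hd0 : 0 ≤ levyProkhorovDist (densMeasure (u s)) (densMeasure (u' s)) :=
      ENNReal.toReal_nonneg
    have hdD : levyProkhorovDist (densMeasure (u s)) (densMeasure (u' s)) ≤ D s :=
      levyProkhorovDist_densMeasure_le (u s) (u' s) ius ius'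
    have hLip : |C s (densMeasure (u s)) - C s (densMeasure (u' s))| ≤
        L * levyProkhorovDist (densMeasure (u s)) (densMeasure (u' s)) :=
      hCLip s hsI _ _ (densMeasure_finite ius) (densMeasure_finite ius')
        (densMeasure_Iio _) (densMeasure_Iio _)
    have hlip' : |C s (densMeasure (u s)) - C s (densMeasure (u' s))| ≤ max L 0 * D s := by
      calc |C s (densMeasure (u s)) - C s (densMeasure (u' s))|
          ≤ L * levyProkhorovDist (densMeasure (u s)) (densMeasure (u' s)) := hLip
        _ ≤ max L 0 * levyProkhorovDist (densMeasure (u s)) (densMeasure (u' s)) :=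
            mul_le_mul_of_nonneg_right (le_max_left _ _) hd0
        _ ≤ max L 0 * D s := mul_le_mul_of_nonneg_left hdD (le_max_right _ _)
    have hC1 := hC01 s (densMeasure (u s))
    have hC2 := hC01 s (densMeasure (u' s))
    have he : u t a - u' t a = (C s (densMeasure (u s)) - C s (densMeasure (u' s))) * N +
        C s (densMeasure (u' s)) * (N - N') := by
      rw [h1, h2]
      ring
    rw [he]
    calc |(C s (densMeasure (u s)) - C s (densMeasure (u' s))) * N +
            C s (densMeasure (u' s)) * (N - N')|
        ≤ |(C s (densMeasure (u s)) - C s (densMeasure (u' s))) * N| +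
            |C s (densMeasure (u' s)) * (N - N')| := abs_add_le _ _
      _ = |C s (densMeasure (u s)) - C s (densMeasure (u' s))| * N +
            C s (densMeasure (u' s)) * |N - N'| := by
          rw [abs_mul, abs_mul, abs_of_nonneg hN0, abs_of_nonneg hC2.1]
      _ ≤ (max L 0 * D s) * (B * R) + 1 * (B * D s) := by
          refine add_le_add ?_ ?_
          · exact mul_le_mul hlip' hNBR hN0 (by positivity)
          · exact mul_le_mul hC2.2 hNN' (abs_nonneg _) one_pos.le
      _ = K * D s := by rw [hKdef]; ring
  -- iterated Grönwall bound
  have bound : ∀ n : ℕ, ∀ t ∈ Icc (0 : ℝ) T₀,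
      D t ≤ 2 * R * (K * t) ^ n / (n.factorial : ℝ) := by
    intro n
    induction n with
    | zero =>
      intro t ht
      obtain ⟨iut, _, _, _⟩ := hu t ht
      obtain ⟨iut', _, _, _⟩ := hu' t ht
      have h1 : D t ≤ ∫ a in Ici (0 : ℝ), (|u t a| + |u' t a|) :=
        integral_mono ((iut.sub iut').abs) (iut.abs.add iut'.abs) fun a => abs_sub _ _
      have h2 : ∫ a in Ici (0 : ℝ), (|u t a| + |u' t a|) =
          L1norm (u t) + L1norm (u' t) := integral_add iut.abs iut'.abs
      simp only [Nat.factorial_zero, Nat.cast_one, pow_zero, mul_one, div_one]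
      calc D t ≤ L1norm (u t) + L1norm (u' t) := h2 ▸ h1
        _ ≤ R + R := add_le_add (hR t ht) (hR' t ht)
        _ = 2 * R := by ring
    | succ n ih =>
      intro t ht
      obtain ⟨iut, _, _, egut⟩ := hu t ht
      obtain ⟨iut', _, _, egut'⟩ := hu' t ht
      have hIOn : IntegrableOn (fun a => |u t a - u' t a|) (Ici 0) volume :=
        (iut.sub iut').abs
      have hdisj : Disjoint (Ico (0 : ℝ) t) (Ici t) := by
        rw [Set.disjoint_left]
        rintro x ⟨_, h2⟩ h3
        exact absurd h3 (not_le_of_gt h2)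
      have hsplit : D t = (∫ a in Ico (0 : ℝ) t, |u t a - u' t a|) +
          ∫ a in Ici t, |u t a - u' t a| := by
        rw [hDdef]
        rw [← setIntegral_union hdisj measurableSet_Ici
          (hIOn.mono_set (Ico_subset_Ici_self)) (hIOn.mono_set (Ici_subset_Ici.mpr ht.1)),
          Ico_union_Ici_eq_Ici ht.1]
      have hzero : ∫ a in Ici t, |u t a - u' t a| = 0 := by
        have h0 : (fun a => |u t a - u' t a|) =ᵐ[volume.restrict (Ici t)] 0 := by
          filter_upwards [egut, egut'] with a h1 h2
          simp [h1, h2]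
        exact integral_eq_zero_of_ae h0
      have hbnd : ∀ᵐ a ∂(volume.restrict (Ico (0 : ℝ) t)),
          |u t a - u' t a| ≤ K * (2 * R * (K * (t - a)) ^ n / (n.factorial : ℝ)) := by
        filter_upwards [key t ht, ae_restrict_mem measurableSet_Ico] with a hka ha
        refine hka.trans (mul_le_mul_of_nonneg_left ?_ hK0)
        exact ih (t - a) ⟨by linarith [ha.2], by linarith [ha.1, ht.2]⟩
      have hcont : Continuous (fun a : ℝ => K * (2 * R * (K * (t - a)) ^ n /
          (n.factorial : ℝ))) := by fun_prop
      have hIone : IntegrableOn (fun a : ℝ => K * (2 * R * (K * (t - a)) ^ n /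
          (n.factorial : ℝ))) (Ico 0 t) volume :=
        (hcont.integrableOn_Icc).mono_set Ico_subset_Icc_self
      have hmono : ∫ a in Ico (0 : ℝ) t, |u t a - u' t a| ≤
          ∫ a in Ico (0 : ℝ) t, K * (2 * R * (K * (t - a)) ^ n / (n.factorial : ℝ)) :=
        integral_mono_ae (hIOn.mono_set Ico_subset_Ici_self) hIone hbnd
      have hIco : ∫ a in Ico (0 : ℝ) t, (t - a) ^ n = t ^ (n + 1) / (n + 1) := by
        rw [integral_Ico_eq_integral_Ioo, ← integral_Ioc_eq_integral_Ioo,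
          ← intervalIntegral.integral_of_le ht.1,
          intervalIntegral.integral_comp_sub_left (fun x => x ^ n) t]
        simp [integral_pow]
      have hcalc : ∫ a in Ico (0 : ℝ) t, K * (2 * R * (K * (t - a)) ^ n / (n.factorial : ℝ)) =
          2 * R * (K * t) ^ (n + 1) / ((n + 1).factorial : ℝ) := by
        have hrw : ∀ a : ℝ, K * (2 * R * (K * (t - a)) ^ n / (n.factorial : ℝ)) =
            (2 * R * K ^ (n + 1) / (n.factorial : ℝ)) * (t - a) ^ n := by
          intro a
          rw [mul_pow]
          ring
        simp_rw [hrw]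
        rw [integral_const_mul, hIco, Nat.factorial_succ]
        have hfac : (n.factorial : ℝ) ≠ 0 := Nat.cast_ne_zero.mpr n.factorial_ne_zero
        have hn1 : ((n : ℝ) + 1) ≠ 0 := by positivity
        push_cast
        rw [mul_pow]
        field_simp
      calc D t = (∫ a in Ico (0 : ℝ) t, |u t a - u' t a|) +
            ∫ a in Ici t, |u t a - u' t a| := hsplit
        _ = ∫ a in Ico (0 : ℝ) t, |u t a - u' t a| := by rw [hzero, add_zero]
        _ ≤ ∫ a in Ico (0 : ℝ) t, K * (2 * R * (K * (t - a)) ^ n / (n.factorial : ℝ)) := hmono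
        _ = 2 * R * (K * t) ^ (n + 1) / ((n + 1).factorial : ℝ) := hcalc
  -- pass to the limit: D t = 0
  have hD0 : ∀ t ∈ Icc (0 : ℝ) T₀, D t = 0 := by
    intro t ht
    refine le_antisymm ?_ (hDnn t)
    have h1 : Tendsto (fun n : ℕ => (K * t) ^ n / (n.factorial : ℝ)) atTop (nhds 0) :=
      FloorSemiring.tendsto_pow_div_factorial_atTop (K * t)
    have h2 : Tendsto (fun n : ℕ => 2 * R * (K * t) ^ n / (n.factorial : ℝ)) atTop (nhds 0) := by
      have := h1.const_mul (2 * R)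
      simpa [mul_div_assoc] using this
    exact ge_of_tendsto' h2 fun n => bound n t ht
  -- a.e. equality
  have haeeq : ∀ t ∈ Icc (0 : ℝ) T₀, u t =ᵐ[volume.restrict (Ici (0 : ℝ))] u' t := by
    intro t ht
    obtain ⟨iut, _, _, _⟩ := hu t ht
    obtain ⟨iut', _, _, _⟩ := hu' t ht
    have hint : Integrable (fun a => |u t a - u' t a|) (volume.restrict (Ici 0)) :=
      (iut.sub iut').abs
    have h0 : (fun a => |u t a - u' t a|) =ᵐ[volume.restrict (Ici (0 : ℝ))] 0 :=
      (integral_eq_zero_iff_of_nonneg (fun a => abs_nonneg _) hint).mp (hD0 t ht)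
    filter_upwards [h0] with a ha
    have : |u t a - u' t a| = 0 := ha
    have := abs_eq_zero.mp this
    linarith [sub_eq_zero.mp this]
  refine ⟨?_, haeeq⟩
  intro t ht
  rw [hL1D, hD0 t ht]
  have hrhs : ∫ s in Icc (0 : ℝ) t, L1norm (fun a => u s a - u' s a) = 0 := by
    rw [setIntegral_congr_fun measurableSet_Icc
      (fun s hs => by rw [hL1D, hD0 s ⟨hs.1, hs.2.trans ht.2⟩] : EqOn _ (fun _ => (0:ℝ)) _)]
    simp
  rw [hrhs, mul_zero]
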